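/- Let r, g_1, …, g_k be real polynomials in n variables and let K := {x ∈ ℝⁿ : g_1(x) ≥ 0, …, g_k(x) ≥ 0} be nonempty. Assume that for some index j₀ ∈ {1,…,k} and some real M > 0 one has g_{j₀}(x) = M − Σ_{i=1}^n x_i². Set g_0 := 1 and r* := inf{r(x) : x ∈ K}. For each natural number d, define the optimal value of the d-th Lasserre relaxation as p_d* := sup{μ ∈ ℝ : there exist sum-of-squares polynomials σ_0, …, σ_k with deg(σ_j g_j) ≤ 2d for all j = 0,…,k and r − μ = Σ_{j=0}^k σ_j g_j as polynomials} (a supremum in the extended reals, equal to −∞ when no such μ exists). Then the sequence (p_d*)_{d∈ℕ} is nondecreasing and converges to r*. -/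

import Mathlib

open MvPolynomial Filter

/-- A real polynomial is a sum of squares. -/
def IsSOS {n : ℕ} (p : MvPolynomial (Fin n) ℝ) : Prop :=
  ∃ (s : ℕ) (q : Fin s → MvPolynomial (Fin n) ℝ), p = ∑ i, q i ^ 2



variable {n : ℕ}

theorem isSOS_iff_isSumSq (p : MvPolynomial (Fin n) ℝ) : IsSOS p ↔ IsSumSq p := by
  constructor
  · rintro ⟨s, q, rfl⟩
    have : ∀ i : Fin s, q i ^ 2 = q i * q i := fun i => sq (q i)
    simp_rw [this]
    exact IsSumSq.sum_mul_self Finset.univ q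
  · intro h
    induction h with
    | zero => exact ⟨0, ![], by simp⟩
    | @sq_add a S _ ih =>
      obtain ⟨s, q, rfl⟩ := ih
      exact ⟨s + 1, Fin.cons a q, by rw [Fin.sum_univ_succ]; simp [sq]⟩

theorem IsSOS.zero : IsSOS (0 : MvPolynomial (Fin n) ℝ) := ⟨0, ![], by simp⟩

theorem IsSOS.add {p q : MvPolynomial (Fin n) ℝ} (hp : IsSOS p) (hq : IsSOS q) :
    IsSOS (p + q) := by
  rw [isSOS_iff_isSumSq] at *
  exact hp.add hq

theorem IsSOS.sq (p : MvPolynomial (Fin n) ℝ) : IsSOS (p ^ 2) :=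
  ⟨1, ![p], by simp⟩

theorem isSumSq_mul_self_mul {R : Type*} [CommRing R] (x : R) {b : R} (hb : IsSumSq b) :
    IsSumSq (x * x * b) := by
  induction hb with
  | zero => simpa using IsSumSq.zero
  | @sq_add a S _ ih =>
    have : x * x * (a * a + S) = (x * a) * (x * a) + x * x * S := by ring
    rw [this]
    exact IsSumSq.sq_add _ ih

theorem IsSOS.mul {p q : MvPolynomial (Fin n) ℝ} (hp : IsSOS p) (hq : IsSOS q) :
    IsSOS (p * q) := by
  rw [isSOS_iff_isSumSq] at *
  induction hp with
  | zero => simpa using IsSumSq.zero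
  | @sq_add a S _ ih =>
    have : (a * a + S) * q = a * a * q + S * q := by ring
    rw [this]
    exact (isSumSq_mul_self_mul a hq).add ih

theorem IsSOS.one : IsSOS (1 : MvPolynomial (Fin n) ℝ) := ⟨1, ![1], by simp⟩

theorem IsSOS.C_nonneg {c : ℝ} (hc : 0 ≤ c) : IsSOS (C c : MvPolynomial (Fin n) ℝ) :=
  ⟨1, ![C (Real.sqrt c)], by
    simp [← map_pow, Real.sq_sqrt hc]⟩

theorem IsSOS.sum {ι : Type*} (s : Finset ι) (f : ι → MvPolynomial (Fin n) ℝ)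
    (hf : ∀ i ∈ s, IsSOS (f i)) : IsSOS (∑ i ∈ s, f i) := by
  classical
  induction s using Finset.induction_on with
  | empty => simpa using IsSOS.zero
  | insert _ _ hx ih =>
    rw [Finset.sum_insert hx]
    exact (hf _ (Finset.mem_insert_self _ _)).add
      (ih fun i hi => hf i (Finset.mem_insert_of_mem hi))

theorem IsSOS.eval_nonneg {p : MvPolynomial (Fin n) ℝ} (hp : IsSOS p) (x : Fin n → ℝ) :
    0 ≤ eval x p := by
  obtain ⟨s, q, rfl⟩ := hp
  rw [map_sum]
  exact Finset.sum_nonneg fun i _ => by rw [map_pow]; positivity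



structure IsQM {n : ℕ} (Q : Set (MvPolynomial (Fin n) ℝ)) : Prop where
  add_mem : ∀ {p q}, p ∈ Q → q ∈ Q → p + q ∈ Q
  sq_mem : ∀ p, p ^ 2 ∈ Q
  sos_mul_mem : ∀ {s m}, IsSOS s → m ∈ Q → s * m ∈ Q

namespace IsQM

variable {n : ℕ} {Q : Set (MvPolynomial (Fin n) ℝ)}

theorem zero_mem (h : IsQM Q) : (0 : MvPolynomial (Fin n) ℝ) ∈ Q := by
  simpa using h.sq_mem 0

theorem one_mem (h : IsQM Q) : (1 : MvPolynomial (Fin n) ℝ) ∈ Q := by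
  simpa using h.sq_mem 1

theorem sos_mem (h : IsQM Q) {s : MvPolynomial (Fin n) ℝ} (hs : IsSOS s) : s ∈ Q := by
  simpa using h.sos_mul_mem hs h.one_mem

theorem C_mem (h : IsQM Q) {c : ℝ} (hc : 0 ≤ c) : (C c : MvPolynomial (Fin n) ℝ) ∈ Q :=
  h.sos_mem (IsSOS.C_nonneg hc)

theorem smul_mem (h : IsQM Q) {c : ℝ} (hc : 0 ≤ c) {m : MvPolynomial (Fin n) ℝ} (hm : m ∈ Q) :
    C c * m ∈ Q :=
  h.sos_mul_mem (IsSOS.C_nonneg hc) hm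

theorem mul_sq_mem (h : IsQM Q) (p : MvPolynomial (Fin n) ℝ) {m : MvPolynomial (Fin n) ℝ}
    (hm : m ∈ Q) : p ^ 2 * m ∈ Q :=
  h.sos_mul_mem (IsSOS.sq p) hm

/-- If `-1 ∈ Q` then `Q` is everything. -/
theorem eq_univ_of_neg_one_mem (h : IsQM Q) (hneg : (-1 : MvPolynomial (Fin n) ℝ) ∈ Q) :
    ∀ p : MvPolynomial (Fin n) ℝ, p ∈ Q := by
  intro p
  have e : (C (1/4 : ℝ) : MvPolynomial (Fin n) ℝ) * 4 = 1 := by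
    rw [show (4 : MvPolynomial (Fin n) ℝ) = C (4 : ℝ) from (map_ofNat C 4).symm, ← map_mul]
    norm_num
  have key : p = C (1/4 : ℝ) * ((p + 1) ^ 2 + (p - 1) ^ 2 * (-1)) := by
    linear_combination (-p) * e
  rw [key]
  exact h.smul_mem (by norm_num) (h.add_mem (h.sq_mem _) (h.mul_sq_mem _ hneg))

/-- A negative constant in a quadratic module forces `-1 ∈ Q`. -/
theorem neg_one_mem_of_neg_C (h : IsQM Q) {c : ℝ} (hc : c < 0)
    (hm : (C c : MvPolynomial (Fin n) ℝ) ∈ Q) : (-1 : MvPolynomial (Fin n) ℝ) ∈ Q := by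
  have h2 := h.smul_mem (c := -1/c) (div_nonneg_of_nonpos (by norm_num) hc.le) hm
  have e : (C (-1/c) : MvPolynomial (Fin n) ℝ) * C c = -1 := by
    rw [← map_mul, div_mul_cancel₀ _ (ne_of_lt hc)]
    simp
  rwa [e] at h2

end IsQM


namespace IsQM
variable {n : ℕ} {Q : Set (MvPolynomial (Fin n) ℝ)}

theorem scale_mem (h : IsQM Q) {c : ℝ} (hc : 0 < c) {p : MvPolynomial (Fin n) ℝ}
    (hp : C c * p ∈ Q) : p ∈ Q := by
  have e : (C (1/c) : MvPolynomial (Fin n) ℝ) * C c = 1 := by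
    rw [← map_mul, one_div, inv_mul_cancel₀ (ne_of_gt hc), map_one]
  have key : p = C (1/c) * (C c * p) := by linear_combination (-p) * e
  rw [key]; exact h.smul_mem (by positivity) hp

theorem sub_C_mem_of_le (h : IsQM Q) {c c' : ℝ} (hcc : c ≤ c') {p : MvPolynomial (Fin n) ℝ}
    (hp : C c - p ∈ Q) : C c' - p ∈ Q := by
  have : C c' - p = (C c - p) + C (c' - c) := by rw [map_sub]; ring
  rw [this]; exact h.add_mem hp (h.C_mem (by linarith))

theorem add_C_mem_of_le (h : IsQM Q) {c c' : ℝ} (hcc : c ≤ c') {p : MvPolynomial (Fin n) ℝ}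
    (hp : C c + p ∈ Q) : C c' + p ∈ Q := by
  have : C c' + p = (C c + p) + C (c' - c) := by rw [map_sub]; ring
  rw [this]; exact h.add_mem hp (h.C_mem (by linarith))

end IsQM

namespace Lasserre

variable {n k : ℕ} (g : Fin k → MvPolynomial (Fin n) ℝ)

/-- The quadratic module generated by `g₁,…,g_k`. -/
def QMod : Set (MvPolynomial (Fin n) ℝ) :=
  {p | ∃ (σ0 : MvPolynomial (Fin n) ℝ) (σ : Fin k → MvPolynomial (Fin n) ℝ),
    IsSOS σ0 ∧ (∀ j, IsSOS (σ j)) ∧ p = σ0 + ∑ j, σ j * g j}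

theorem qmod_isQM : IsQM (QMod g) := by
  constructor
  · rintro p q ⟨σ0, σ, hσ0, hσ, rfl⟩ ⟨τ0, τ, hτ0, hτ, rfl⟩
    refine ⟨σ0 + τ0, fun j => σ j + τ j, hσ0.add hτ0, fun j => (hσ j).add (hτ j), ?_⟩
    simp only []
    rw [show (∑ j : Fin k, (σ j + τ j) * g j) = ∑ j : Fin k, (σ j * g j + τ j * g j) by
      exact Finset.sum_congr rfl fun j _ => by ring, Finset.sum_add_distrib]
    ring
  · intro p
    exact ⟨p ^ 2, fun _ => 0, IsSOS.sq p, fun _ => IsSOS.zero, by simp⟩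
  · rintro s p hs ⟨σ0, σ, hσ0, hσ, rfl⟩
    refine ⟨s * σ0, fun j => s * σ j, hs.mul hσ0, fun j => hs.mul (hσ j), ?_⟩
    rw [mul_add, Finset.mul_sum]
    simp_rw [mul_assoc]

theorem g_mem_qmod (j : Fin k) : g j ∈ QMod g := by
  classical
  refine ⟨0, fun j' => if j' = j then 1 else 0, IsSOS.zero,
    fun j' => by by_cases h : j' = j <;> simp [h] <;> [exact IsSOS.one; exact IsSOS.zero], ?_⟩
  simp only [ite_mul, one_mul, zero_mul]
  rw [Finset.sum_ite_eq' Finset.univ j (fun j' => g j')]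
  simp
theorem sos_mem_qmod {s : MvPolynomial (Fin n) ℝ} (hs : IsSOS s) : s ∈ QMod g :=
  (qmod_isQM g).sos_mem hs


/-- `p` is bounded with respect to the quadratic module. -/
def Bdd (p : MvPolynomial (Fin n) ℝ) : Prop :=
  ∃ c : ℝ, 0 ≤ c ∧ C c - p ∈ QMod g ∧ C c + p ∈ QMod g

theorem bdd_C (a : ℝ) : Bdd g (C a) := by
  refine ⟨|a|, abs_nonneg a, ?_, ?_⟩
  · rw [← map_sub]; exact (qmod_isQM g).C_mem (by simp [abs_nonneg, neg_abs_le, sub_nonneg,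
      le_abs_self])
  · rw [← map_add]
    exact (qmod_isQM g).C_mem (by nlinarith [neg_abs_le a])

theorem bdd_add {p q : MvPolynomial (Fin n) ℝ} (hp : Bdd g p) (hq : Bdd g q) : Bdd g (p + q) := by
  obtain ⟨c1, hc1, h1, h1'⟩ := hp
  obtain ⟨c2, hc2, h2, h2'⟩ := hq
  refine ⟨c1 + c2, by linarith, ?_, ?_⟩
  · have : C (c1 + c2) - (p + q) = (C c1 - p) + (C c2 - q) := by rw [map_add]; ring
    rw [this]; exact (qmod_isQM g).add_mem h1 h2
  · have : C (c1 + c2) + (p + q) = (C c1 + p) + (C c2 + q) := by rw [map_add]; ring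
    rw [this]; exact (qmod_isQM g).add_mem h1' h2'

theorem bdd_neg {p : MvPolynomial (Fin n) ℝ} (hp : Bdd g p) : Bdd g (-p) := by
  obtain ⟨c, hc, h1, h2⟩ := hp
  exact ⟨c, hc, by rw [sub_neg_eq_add]; exact h2, by rw [← sub_eq_add_neg]; exact h1⟩

theorem bdd_X {j₀ : Fin k} {M : ℝ} (hM : 0 < M) (hball : g j₀ = C M - ∑ i, X i ^ 2)
    (i : Fin n) : Bdd g (X i) := by
  have hQM := qmod_isQM g
  have hs : (∑ l ∈ Finset.univ.erase i, X l ^ 2) + X i ^ 2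
      = ∑ l : Fin n, (X l ^ 2 : MvPolynomial (Fin n) ℝ) :=
    Finset.sum_erase_add _ _ (Finset.mem_univ i)
  have hrest : g j₀ + ∑ l ∈ Finset.univ.erase i, X l ^ 2 ∈ QMod g :=
    hQM.add_mem (g_mem_qmod g j₀)
      (hQM.sos_mem (IsSOS.sum _ _ fun l _ => IsSOS.sq (X l)))
  have key1 : (C (1 + M) : MvPolynomial (Fin n) ℝ) - C 2 * X i
      = (X i - 1) ^ 2 + (g j₀ + ∑ l ∈ Finset.univ.erase i, X l ^ 2) := by
    rw [hball]
    simp only [map_add, map_one, map_ofNat]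
    linear_combination -hs
  have key2 : (C (1 + M) : MvPolynomial (Fin n) ℝ) + C 2 * X i
      = (X i + 1) ^ 2 + (g j₀ + ∑ l ∈ Finset.univ.erase i, X l ^ 2) := by
    rw [hball]
    simp only [map_add, map_one, map_ofNat]
    linear_combination -hs
  refine ⟨(1 + M) / 2, by linarith, ?_, ?_⟩
  · refine hQM.scale_mem (c := 2) (by norm_num) ?_
    have e : (C (2:ℝ) : MvPolynomial (Fin n) ℝ) * (C ((1 + M)/2) - X i)
        = C (1 + M) - C 2 * X i := by
      rw [mul_sub, ← map_mul]
      congr 2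
      ring
    rw [e, key1]
    exact hQM.add_mem (hQM.sq_mem _) hrest
  · refine hQM.scale_mem (c := 2) (by norm_num) ?_
    have e : (C (2:ℝ) : MvPolynomial (Fin n) ℝ) * (C ((1 + M)/2) + X i)
        = C (1 + M) + C 2 * X i := by
      rw [mul_add, ← map_mul]
      congr 2
      ring
    rw [e, key2]
    exact hQM.add_mem (hQM.sq_mem _) hrest

theorem bdd_sq_ub {p : MvPolynomial (Fin n) ℝ} (hp : Bdd g p) :
    ∃ c : ℝ, 0 ≤ c ∧ C c - p ^ 2 ∈ QMod g := by
  have hQM := qmod_isQM g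
  obtain ⟨c, hc, h1, h2⟩ := hp
  set d : ℝ := c + 1 with hd
  have hdpos : 0 < d := by linarith
  have h1' : C d - p ∈ QMod g := hQM.sub_C_mem_of_le (by linarith) h1
  have h2' : C d + p ∈ QMod g := hQM.add_C_mem_of_le (by linarith) h2
  have e : (C (1/(2*d)) : MvPolynomial (Fin n) ℝ) * (2 * C d) = 1 := by
    rw [show ((2 : MvPolynomial (Fin n) ℝ)) = C (2:ℝ) from (map_ofNat C 2).symm,
      ← mul_assoc, ← map_mul, ← map_mul]
    rw [show (1/(2*d)*2*d : ℝ) = 1 by field_simp, map_one]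
  refine ⟨d ^ 2, by positivity, ?_⟩
  have key : C (d ^ 2) - p ^ 2
      = C (1/(2*d)) * ((C d + p) ^ 2 * (C d - p) + (C d - p) ^ 2 * (C d + p)) := by
    rw [map_pow]
    linear_combination (-((C d : MvPolynomial (Fin n) ℝ) ^ 2 - p ^ 2)) * e
  rw [key]
  exact hQM.smul_mem (by positivity)
    (hQM.add_mem (hQM.mul_sq_mem _ h1') (hQM.mul_sq_mem _ h2'))

theorem bdd_mul {p q : MvPolynomial (Fin n) ℝ} (hp : Bdd g p) (hq : Bdd g q) : Bdd g (p * q) := by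
  have hQM := qmod_isQM g
  obtain ⟨k₁, hk₁0, hk₁⟩ := bdd_sq_ub g (bdd_add g hp hq)
  obtain ⟨k₂, hk₂0, hk₂⟩ := bdd_sq_ub g (bdd_add g hp (bdd_neg g hq))
  have hA : C k₁ - C 4 * (p * q) ∈ QMod g := by
    have key : (C k₁ : MvPolynomial (Fin n) ℝ) - C 4 * (p * q)
        = (C k₁ - (p + q) ^ 2) + (p + -q) ^ 2 := by
      rw [map_ofNat]; ring
    rw [key]; exact hQM.add_mem hk₁ (hQM.sq_mem _)
  have hB : C k₂ + C 4 * (p * q) ∈ QMod g := by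
    have key : (C k₂ : MvPolynomial (Fin n) ℝ) + C 4 * (p * q)
        = (C k₂ - (p + -q) ^ 2) + (p + q) ^ 2 := by
      rw [map_ofNat]; ring
    rw [key]; exact hQM.add_mem hk₂ (hQM.sq_mem _)
  have hA' : C (k₁/4) - p * q ∈ QMod g := by
    refine hQM.scale_mem (c := 4) (by norm_num) ?_
    have e : (C (4:ℝ) : MvPolynomial (Fin n) ℝ) * (C (k₁/4) - p * q)
        = C k₁ - C 4 * (p * q) := by
      rw [mul_sub, ← map_mul]
      congr 2
      ring
    rw [e]; exact hA
  have hB' : C (k₂/4) + p * q ∈ QMod g := by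
    refine hQM.scale_mem (c := 4) (by norm_num) ?_
    have e : (C (4:ℝ) : MvPolynomial (Fin n) ℝ) * (C (k₂/4) + p * q)
        = C k₂ + C 4 * (p * q) := by
      rw [mul_add, ← map_mul]
      congr 2
      ring
    rw [e]; exact hB
  refine ⟨k₁/4 + k₂/4, by positivity, ?_, ?_⟩
  · exact hQM.sub_C_mem_of_le (by linarith) hA'
  · exact hQM.add_C_mem_of_le (by linarith) hB'

/-- Archimedean property of the quadratic module containing the ball constraint. -/
theorem bdd_all {j₀ : Fin k} {M : ℝ} (hM : 0 < M) (hball : g j₀ = C M - ∑ i, X i ^ 2)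
    (p : MvPolynomial (Fin n) ℝ) : Bdd g p := by
  induction p using MvPolynomial.induction_on with
  | C a => exact bdd_C g a
  | add p q hp hq => exact bdd_add g hp hq
  | mul_X p i hp => exact bdd_mul g hp (bdd_X g hM hball i)

end Lasserre

namespace IsQM

variable {n : ℕ} {Q : Set (MvPolynomial (Fin n) ℝ)}

/-- Archimedean property for a quadratic module. -/
def Arch (Q : Set (MvPolynomial (Fin n) ℝ)) : Prop :=
  ∀ p : MvPolynomial (Fin n) ℝ, ∃ c : ℝ, 0 ≤ c ∧ C c - p ∈ Q ∧ C c + p ∈ Q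

set_option maxHeartbeats 1000000 in
/-- Key lemma: in an archimedean quadratic module, if `a * s = 1 + m` with `s` a
sum of squares and `m ∈ Q`, then `a ∈ Q`. -/
theorem mem_of_mul_sos (hQM : IsQM Q) (harch : Arch Q) {a s m : MvPolynomial (Fin n) ℝ}
    (hs : IsSOS s) (hm : m ∈ Q) (h : a * s = 1 + m) : a ∈ Q := by
  obtain ⟨c₀, hc₀, hca₀, hca₀'⟩ := harch a
  obtain ⟨c, hcdef⟩ : ∃ c : ℝ, c = c₀ + 1 := ⟨_, rfl⟩
  have hc1 : (1:ℝ) ≤ c := by linarith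
  have hcpos : (0:ℝ) < c := by linarith
  have hca : C c - a ∈ Q := hQM.sub_C_mem_of_le (by linarith) hca₀
  have hca' : C c + a ∈ Q := hQM.add_C_mem_of_le (by linarith) hca₀'
  obtain ⟨ν₀, hν₀, hνs₀, -⟩ := harch s
  obtain ⟨ν, hνdef⟩ : ∃ ν : ℝ, ν = ν₀ + 1 := ⟨_, rfl⟩
  have hν1 : (1:ℝ) ≤ ν := by linarith
  have hνs : C ν - s ∈ Q := hQM.sub_C_mem_of_le (by linarith) hνs₀
  obtain ⟨γ, hγ, hγm, -⟩ := harch m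
  obtain ⟨β, hβdef⟩ : ∃ β : ℝ, β = ν * (1 + γ) := ⟨_, rfl⟩
  have hβpos : 0 < β := by nlinarith
  obtain ⟨t, htdef⟩ : ∃ t : ℝ, t = min (1/β) (1/(c * ν^2)) := ⟨_, rfl⟩
  have htpos : 0 < t := by
    rw [htdef]; apply lt_min <;> positivity
  have htβ : t * β ≤ 1 := by
    have : t ≤ 1/β := htdef ▸ min_le_left _ _
    rw [le_div_iff₀ hβpos] at this
    linarith
  have htν : t * (c * ν^2) ≤ 1 := by
    have h1 : (0:ℝ) < c * ν^2 := by positivity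
    have : t ≤ 1/(c * ν^2) := htdef ▸ min_le_right _ _
    rw [le_div_iff₀ h1] at this
    linarith
  obtain ⟨δ, hδdef⟩ : ∃ δ : ℝ, δ = 2*t - β*t^2 := ⟨_, rfl⟩
  have hδpos : 0 < δ := by nlinarith
  obtain ⟨ci, hcidef⟩ : ∃ ci : ℝ, ci = 1/c := ⟨_, rfl⟩
  have hci : c * ci = 1 := by
    rw [hcidef]; field_simp
  have hcipos : 0 < ci := by rw [hcidef]; positivity
  have hcile : ci ≤ 1 := by
    rw [hcidef]; rw [div_le_one hcpos]; linarith
  obtain ⟨θ, hθdef⟩ : ∃ θ : ℝ, θ = 1 - 2*t*ci + t^2*ν^2 := ⟨_, rfl⟩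
  have hci2 : ci^2 ≤ 1 := by nlinarith
  have hν2 : 1 ≤ ν^2 := by nlinarith
  have hθ0 : 0 ≤ θ := by nlinarith [sq_nonneg (1 - t*ci), sq_nonneg t, hci2, hν2]
  have hθ1 : θ < 1 := by
    have h2 : t * ν^2 ≤ ci := by nlinarith
    nlinarith
  obtain ⟨w, hwdef⟩ : ∃ w : MvPolynomial (Fin n) ℝ, w = 1 - C t * s := ⟨_, rfl⟩
  have hciP : (C c : MvPolynomial (Fin n) ℝ) * C ci = 1 := by
    rw [← map_mul, hci, map_one]
  -- claim 1
  have claim1 : a - w^2 * a - C δ ∈ Q := by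
    have key : a - w^2 * a - C δ
        = C (2*t) * m + C (t^2*(1+γ)) * (C ν - s) + C (t^2) * (s * (C γ - m)) := by
      simp only [hwdef, hδdef, hβdef, map_sub, map_mul, map_add, map_pow, map_one, map_ofNat]
      linear_combination (C t * (2 - C t * s)) * h
    rw [key]
    exact hQM.add_mem (hQM.add_mem (hQM.smul_mem (by positivity) hm)
      (hQM.smul_mem (by nlinarith) hνs)) (hQM.smul_mem (by positivity)
      (hQM.sos_mul_mem hs hγm))
  -- claim 2
  have claim2 : C θ - w^2 ∈ Q := by
    have key : C θ - w^2
        = C (2*t*ci) * (s * (C c - a) + m)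
          + C (t^2) * ((C ν - s)^2 + C 2 * (s * (C ν - s))) := by
      simp only [hwdef, hθdef, map_sub, map_mul, map_add, map_pow, map_one, map_ofNat]
      linear_combination (2*(C t)*(C ci))*h - (2*(C t)*s)*hciP
    rw [key]
    refine hQM.add_mem (hQM.smul_mem (by positivity)
      (hQM.add_mem (hQM.sos_mul_mem hs hca) hm)) (hQM.smul_mem (by positivity) ?_)
    exact hQM.add_mem (hQM.sq_mem _) (hQM.smul_mem (by norm_num) (hQM.sos_mul_mem hs hνs))
  -- claim 3
  have claim3 : ∀ r : ℕ, C (θ^r) - w^(2*r) ∈ Q := by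
    intro r
    induction r with
    | zero => simpa using hQM.zero_mem
    | succ r ih =>
      have key : C (θ^(r+1)) - w^(2*(r+1))
          = C θ * (C (θ^r) - w^(2*r)) + (w^r)^2 * (C θ - w^2) := by
        simp only [map_pow]
        ring
      rw [key]
      exact hQM.add_mem (hQM.smul_mem hθ0 ih) (hQM.mul_sq_mem _ claim2)
  -- claim 4
  have claim4 : ∀ r : ℕ, a - w^(2*(r+1)) * a - C δ ∈ Q := by
    intro r
    induction r with
    | zero => simpa using claim1
    | succ r ih =>
      have key : a - w^(2*(r+2)) * a - C δ
          = (a - w^(2*(r+1)) * a - C δ) + (w^(r+1))^2 * (a - w^2 * a - C δ)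
            + C δ * (w^(r+1))^2 := by
        ring
      rw [key]
      exact hQM.add_mem (hQM.add_mem ih (hQM.mul_sq_mem _ claim1))
        (hQM.smul_mem hδpos.le (hQM.sq_mem _))
  -- conclusion
  obtain ⟨r₀, hr₀⟩ := exists_pow_lt_of_lt_one (by positivity : (0:ℝ) < δ/c) hθ1
  obtain ⟨R, hRdef⟩ : ∃ R : ℕ, R = r₀ + 1 := ⟨_, rfl⟩
  have hθR : c * θ^R ≤ c * θ^r₀ := by
    have hle := pow_le_pow_of_le_one hθ0 hθ1.le (Nat.le_succ r₀)
    simp only [Nat.succ_eq_add_one] at hle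
    rw [hRdef]
    nlinarith [hcpos.le, hle]
  have hfin : c * θ^R < δ := by
    rw [lt_div_iff₀ hcpos] at hr₀
    nlinarith
  have key : a = (a - w^(2*R) * a - C δ) + (w^R)^2 * (a + C c)
      + C c * (C (θ^R) - w^(2*R)) + C (δ - c*θ^R) := by
    simp only [map_sub, map_mul, map_pow]
    ring
  rw [key]
  refine hQM.add_mem (hQM.add_mem (hQM.add_mem ?_ (hQM.mul_sq_mem _ ?_))
    (hQM.smul_mem hcpos.le (claim3 R))) (hQM.C_mem (by linarith))
  · have := claim4 r₀
    rwa [hRdef]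
  · have e : a + C c = C c + a := by ring
    rw [e]; exact hca'

end IsQM

namespace IsQM

variable {n : ℕ}

/-- Every proper quadratic module extends to a maximal proper one. -/
theorem exists_maximal {Q0 : Set (MvPolynomial (Fin n) ℝ)} (hQ0 : IsQM Q0)
    (hproper : (-1 : MvPolynomial (Fin n) ℝ) ∉ Q0) :
    ∃ Q, Q0 ⊆ Q ∧ IsQM Q ∧ (-1 : MvPolynomial (Fin n) ℝ) ∉ Q ∧
      ∀ Q', IsQM Q' → Q ⊆ Q' → (-1 : MvPolynomial (Fin n) ℝ) ∉ Q' → Q' = Q := by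
  set S : Set (Set (MvPolynomial (Fin n) ℝ)) :=
    {Q | IsQM Q ∧ (-1 : MvPolynomial (Fin n) ℝ) ∉ Q} with hS
  have hzorn := zorn_subset_nonempty S ?_ Q0 ⟨hQ0, hproper⟩
  · obtain ⟨Qm, hsub, hmax⟩ := hzorn
    obtain ⟨⟨hQM, hprop⟩, hmax'⟩ := hmax
    refine ⟨Qm, hsub, hQM, hprop, fun Q' hQ' hsub' hprop' => ?_⟩
    exact Set.Subset.antisymm (hmax' ⟨hQ', hprop'⟩ hsub') hsub'
  · intro c hcS hchain hcne
    obtain ⟨Qc, hQc⟩ := hcne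
    refine ⟨⋃₀ c, ⟨⟨?_, ?_, ?_⟩, ?_⟩, fun Qd hQd => Set.subset_sUnion_of_mem hQd⟩
    · rintro p q ⟨Q₁, hQ₁, hp⟩ ⟨Q₂, hQ₂, hq⟩
      rcases hchain.total hQ₁ hQ₂ with h12 | h21
      · exact ⟨Q₂, hQ₂, (hcS hQ₂).1.add_mem (h12 hp) hq⟩
      · exact ⟨Q₁, hQ₁, (hcS hQ₁).1.add_mem hp (h21 hq)⟩
    · intro p
      exact ⟨Qc, hQc, (hcS hQc).1.sq_mem p⟩
    · rintro s p hs ⟨Q₁, hQ₁, hp⟩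
      exact ⟨Q₁, hQ₁, (hcS hQ₁).1.sos_mul_mem hs hp⟩
    · rintro ⟨Q₁, hQ₁, hneg⟩
      exact (hcS hQ₁).2 hneg

/-- A maximal proper archimedean quadratic module is total: `b ∈ Q` or `-b ∈ Q`. -/
theorem total_of_maximal {Q : Set (MvPolynomial (Fin n) ℝ)} (hQM : IsQM Q)
    (hprop : (-1 : MvPolynomial (Fin n) ℝ) ∉ Q) (harch : Arch Q)
    (hmax : ∀ Q', IsQM Q' → Q ⊆ Q' → (-1 : MvPolynomial (Fin n) ℝ) ∉ Q' → Q' = Q)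
    (b : MvPolynomial (Fin n) ℝ) : b ∈ Q ∨ -b ∈ Q := by
  by_contra hcon
  push_neg at hcon
  obtain ⟨hb, hnb⟩ := hcon
  -- the quadratic module generated by `Q` and an element `u`
  have hgen : ∀ u : MvPolynomial (Fin n) ℝ,
      IsQM {x | ∃ q ∈ Q, ∃ s, IsSOS s ∧ x = q + u * s} := by
    intro u
    constructor
    · rintro p₁ p₂ ⟨q₁, hq₁, s₁, hs₁, rfl⟩ ⟨q₂, hq₂, s₂, hs₂, rfl⟩
      exact ⟨q₁ + q₂, hQM.add_mem hq₁ hq₂, s₁ + s₂, hs₁.add hs₂, by ring⟩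
    · intro p
      exact ⟨p ^ 2, hQM.sq_mem p, 0, IsSOS.zero, by ring⟩
    · rintro s p hs ⟨q, hq, s', hs', rfl⟩
      exact ⟨s * q, hQM.sos_mul_mem hs hq, s * s', hs.mul hs', by ring⟩
  have hsubgen : ∀ u, Q ⊆ {x | ∃ q ∈ Q, ∃ s, IsSOS s ∧ x = q + u * s} :=
    fun u x hx => ⟨x, hx, 0, IsSOS.zero, by ring⟩
  have hmemgen : ∀ u, u ∈ {x | ∃ q ∈ Q, ∃ s, IsSOS s ∧ x = q + u * s} :=
    fun u => ⟨0, hQM.zero_mem, 1, IsSOS.one, by ring⟩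
  have hneg1 : ∀ u, u ∉ Q →
      (-1 : MvPolynomial (Fin n) ℝ) ∈ {x | ∃ q ∈ Q, ∃ s, IsSOS s ∧ x = q + u * s} := by
    intro u hu
    by_contra hne
    have := hmax _ (hgen u) (hsubgen u) hne
    rw [← this] at hu
    exact hu (hmemgen u)
  obtain ⟨q₁, hq₁, σ₁, hσ₁, h₁⟩ := hneg1 b hb
  obtain ⟨q₂, hq₂, σ₂, hσ₂, h₂⟩ := hneg1 (-b) hnb
  obtain ⟨k, hk0, hkb, hkb'⟩ := harch b
  -- memberships
  have m₁ : C k * σ₁ - 1 ∈ Q := by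
    have e : C k * σ₁ - 1 = σ₁ * (C k + b) + q₁ := by linear_combination h₁
    rw [e]
    exact hQM.add_mem (hQM.sos_mul_mem hσ₁ hkb') hq₁
  have m₂ : C k * σ₂ - 1 ∈ Q := by
    have e : C k * σ₂ - 1 = σ₂ * (C k - b) + q₂ := by linear_combination h₂
    rw [e]
    exact hQM.add_mem (hQM.sos_mul_mem hσ₂ hkb) hq₂
  have m₃ : -(σ₁ + σ₂) ∈ Q := by
    have e : -(σ₁ + σ₂) = σ₂ * q₁ + σ₁ * q₂ := by
      linear_combination σ₂ * h₁ + σ₁ * h₂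
    rw [e]
    exact hQM.add_mem (hQM.sos_mul_mem hσ₂ hq₁) (hQM.sos_mul_mem hσ₁ hq₂)
  have m₄ : (-2 : MvPolynomial (Fin n) ℝ) ∈ Q := by
    have e : (-2 : MvPolynomial (Fin n) ℝ)
        = (C k * σ₁ - 1) + (C k * σ₂ - 1) + C k * (-(σ₁ + σ₂)) := by ring
    rw [e]
    exact hQM.add_mem (hQM.add_mem m₁ m₂) (hQM.smul_mem hk0 m₃)
  have m₅ : (-1 : MvPolynomial (Fin n) ℝ) ∈ Q := by
    have e : (-1 : MvPolynomial (Fin n) ℝ) = C (1/2 : ℝ) * (-2) := by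
      rw [show ((-2 : MvPolynomial (Fin n) ℝ)) = C (-2 : ℝ) by rw [map_neg, map_ofNat],
        ← map_mul]
      norm_num
    rw [e]
    exact hQM.smul_mem (by norm_num) m₄
  exact hprop m₅

end IsQM

namespace IsQM

variable {n : ℕ} {Q : Set (MvPolynomial (Fin n) ℝ)}

set_option maxHeartbeats 2000000 in
/-- From a proper, total, archimedean quadratic module one obtains a point of `ℝⁿ`
at which every element of `Q` is nonnegative. -/
theorem exists_point (hQM : IsQM Q) (hprop : (-1 : MvPolynomial (Fin n) ℝ) ∉ Q)
    (harch : Arch Q) (htot : ∀ b : MvPolynomial (Fin n) ℝ, b ∈ Q ∨ -b ∈ Q) :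
    ∃ x : Fin n → ℝ, ∀ p ∈ Q, 0 ≤ eval x p := by
  classical
  have hproperC : ∀ r : ℝ, r < 0 → (C r : MvPolynomial (Fin n) ℝ) ∉ Q := by
    intro r hr hmem
    exact hprop (hQM.neg_one_mem_of_neg_C hr hmem)
  set S : MvPolynomial (Fin n) ℝ → Set ℝ := fun b => {r | C r - b ∈ Q} with hSdef
  have hSne : ∀ b, (S b).Nonempty := by
    intro b
    obtain ⟨c, _, h1, _⟩ := harch b
    exact ⟨c, h1⟩
  have hbdd : ∀ b, BddBelow (S b) := by
    intro b
    obtain ⟨c, _, _, h2⟩ := harch b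
    refine ⟨-c, fun r hr => ?_⟩
    by_contra hlt
    push_neg at hlt
    have hsum : (C (r + c) : MvPolynomial (Fin n) ℝ) ∈ Q := by
      have e : (C (r + c) : MvPolynomial (Fin n) ℝ) = (C r - b) + (C c + b) := by
        rw [map_add]; ring
      rw [e]; exact hQM.add_mem hr h2
    exact hproperC (r + c) (by linarith) hsum
  set α : MvPolynomial (Fin n) ℝ → ℝ := fun b => sInf (S b) with hαdef
  have L1 : ∀ (b : MvPolynomial (Fin n) ℝ) (r : ℝ), C r - b ∈ Q → α b ≤ r :=
    fun b r hr => csInf_le (hbdd b) hr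
  have L3 : ∀ (b : MvPolynomial (Fin n) ℝ) (ε : ℝ), 0 < ε → C (α b + ε) - b ∈ Q := by
    intro b ε hε
    obtain ⟨r, hrS, hrlt⟩ := exists_lt_of_csInf_lt (hSne b)
      (lt_add_of_pos_right (sInf (S b)) hε)
    have e : (C (α b + ε) : MvPolynomial (Fin n) ℝ) - b = (C r - b) + C (α b + ε - r) := by
      simp only [map_add, map_sub]; ring
    rw [e]
    refine hQM.add_mem hrS (hQM.C_mem ?_)
    have : α b = sInf (S b) := rfl
    linarith [hrlt]
  have L5 : ∀ (b : MvPolynomial (Fin n) ℝ) (u : ℝ), b - C u ∈ Q → u ≤ α b := by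
    intro b u hu
    by_contra hlt
    push_neg at hlt
    obtain ⟨r, hrS, hrlt⟩ := exists_lt_of_csInf_lt (hSne b) hlt
    have hsum : (C (r - u) : MvPolynomial (Fin n) ℝ) ∈ Q := by
      have e : (C (r - u) : MvPolynomial (Fin n) ℝ) = (C r - b) + (b - C u) := by
        rw [map_sub]; ring
      rw [e]; exact hQM.add_mem hrS hu
    exact hproperC (r - u) (by linarith) hsum
  have L4 : ∀ (b : MvPolynomial (Fin n) ℝ) (ε : ℝ), 0 < ε → b - C (α b - ε) ∈ Q := by
    intro b ε hε
    have hnot : (C (α b - ε) : MvPolynomial (Fin n) ℝ) - b ∉ Q := by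
      intro hmem
      have := L1 b _ hmem
      linarith
    rcases htot (C (α b - ε) - b) with h | h
    · exact absurd h hnot
    · rwa [neg_sub] at h
  have Lnonneg : ∀ b ∈ Q, 0 ≤ α b := by
    intro b hb
    refine L5 b 0 ?_
    rwa [map_zero, sub_zero]
  have Lconst : ∀ u : ℝ, α (C u) = u := by
    intro u
    refine le_antisymm (L1 _ u (by rw [sub_self]; exact hQM.zero_mem)) (L5 _ u ?_)
    rw [sub_self]; exact hQM.zero_mem
  have Ladd : ∀ b c : MvPolynomial (Fin n) ℝ, α (b + c) = α b + α c := by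
    intro b c
    refine le_antisymm ?_ ?_
    · refine le_of_forall_pos_le_add fun ε hε => ?_
      have h1 := L3 b (ε/2) (by linarith)
      have h2 := L3 c (ε/2) (by linarith)
      refine L1 _ (α b + α c + ε) ?_
      have eε : (C ε : MvPolynomial (Fin n) ℝ) = C (ε/2) + C (ε/2) := by
        rw [← map_add]; norm_num
      have e : (C (α b + α c + ε) : MvPolynomial (Fin n) ℝ) - (b + c)
          = (C (α b + ε/2) - b) + (C (α c + ε/2) - c) := by
        simp only [map_add, map_sub]
        linear_combination eε
      rw [e]; exact hQM.add_mem h1 h2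
    · refine le_of_forall_pos_le_add fun ε hε => ?_
      have h1 := L4 b (ε/2) (by linarith)
      have h2 := L4 c (ε/2) (by linarith)
      have key : α b + α c - ε ≤ α (b + c) := by
        refine L5 _ _ ?_
        have eε : (C ε : MvPolynomial (Fin n) ℝ) = C (ε/2) + C (ε/2) := by
          rw [← map_add]; norm_num
        have e : (b + c) - (C (α b + α c - ε) : MvPolynomial (Fin n) ℝ)
            = (b - C (α b - ε/2)) + (c - C (α c - ε/2)) := by
          simp only [map_add, map_sub]
          linear_combination eε
        rw [e]; exact hQM.add_mem h1 h2
      linarith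
  have Lzero : α 0 = 0 := by
    have := Lconst 0
    rwa [map_zero] at this
  have Lneg : ∀ b : MvPolynomial (Fin n) ℝ, α (-b) = -α b := by
    intro b
    have h := Ladd b (-b)
    rw [add_neg_cancel, Lzero] at h
    linarith
  have Lsmul : ∀ (u : ℝ) (b : MvPolynomial (Fin n) ℝ), α (C u * b) = u * α b := by
    have Lpos : ∀ (u : ℝ), 0 < u → ∀ b, α (C u * b) = u * α b := by
      intro u hu b
      refine le_antisymm ?_ ?_
      · refine le_of_forall_pos_le_add fun ε hε => ?_
        have h1 := hQM.smul_mem hu.le (L3 b (ε/u) (by positivity))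
        have e : (C (u * α b + ε) : MvPolynomial (Fin n) ℝ) - C u * b
            = C u * (C (α b + ε/u) - b) := by
          have eu : (u : ℝ) * (ε/u) = ε := by field_simp
          have e1 : (C (u * α b) : MvPolynomial (Fin n) ℝ) = C u * C (α b) := map_mul C u (α b)
          have e2 : (C u : MvPolynomial (Fin n) ℝ) * C (ε/u) = C ε := by rw [← map_mul, eu]
          simp only [map_add, map_sub]
          linear_combination e1 - e2
        have := L1 (C u * b) (u * α b + ε) (by rw [e]; exact h1)
        linarith
      · refine le_of_forall_pos_le_add fun ε hε => ?_
        have h1 := hQM.smul_mem hu.le (L4 b (ε/u) (by positivity))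
        have e : C u * (b - C (α b - ε/u))
            = C u * b - (C (u * α b - ε) : MvPolynomial (Fin n) ℝ) := by
          have eu : (u : ℝ) * (ε/u) = ε := by field_simp
          have e1 : (C (u * α b) : MvPolynomial (Fin n) ℝ) = C u * C (α b) := map_mul C u (α b)
          have e2 : (C u : MvPolynomial (Fin n) ℝ) * C (ε/u) = C ε := by rw [← map_mul, eu]
          simp only [map_sub]
          linear_combination e1 + e2
        have := L5 (C u * b) (u * α b - ε) (by rw [← e]; exact h1)
        linarith
    intro u b
    rcases lt_trichotomy u 0 with hu | hu | hu
    · have h := Lpos (-u) (by linarith) b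
      have e : C (-u) * b = -(C u * b) := by rw [map_neg]; ring
      rw [e, Lneg] at h
      linarith
    · subst hu
      rw [map_zero, zero_mul, Lzero, zero_mul]
    · exact Lpos u hu b
  have Lsq : ∀ b : MvPolynomial (Fin n) ℝ, α (b ^ 2) = (α b) ^ 2 := by
    intro b
    obtain ⟨b', hb'⟩ : ∃ b', b' = b - C (α b) := ⟨_, rfl⟩
    have hαb' : α b' = 0 := by
      rw [hb', sub_eq_add_neg, ← map_neg, Ladd, Lconst]
      ring
    have hup : α (b' ^ 2) ≤ 0 := by
      have hle : ∀ ε : ℝ, 0 < ε → α (b' ^ 2) ≤ ε ^ 2 := by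
        intro ε hε
        have h1 : C ε - b' ∈ Q := by
          have := L3 b' ε hε
          rwa [hαb', zero_add] at this
        have h2 : C ε + b' ∈ Q := by
          have := L4 b' ε hε
          rw [hαb', zero_sub, map_neg, sub_neg_eq_add] at this
          rwa [add_comm]
        refine L1 _ (ε ^ 2) ?_
        have einv : (C (1/(2*ε)) : MvPolynomial (Fin n) ℝ) * (2 * C ε) = 1 := by
          rw [show ((2 : MvPolynomial (Fin n) ℝ)) = C (2:ℝ) from (map_ofNat C 2).symm,
            ← mul_assoc, ← map_mul, ← map_mul]
          rw [show (1/(2*ε)*2*ε : ℝ) = 1 by field_simp, map_one]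
        have e : (C (ε ^ 2) : MvPolynomial (Fin n) ℝ) - b' ^ 2
            = C (1/(2*ε)) * ((C ε + b') ^ 2 * (C ε - b') + (C ε - b') ^ 2 * (C ε + b')) := by
          rw [map_pow]
          linear_combination (-((C ε : MvPolynomial (Fin n) ℝ) ^ 2 - b' ^ 2)) * einv
        rw [e]
        exact hQM.smul_mem (by positivity)
          (hQM.add_mem (hQM.mul_sq_mem _ h1) (hQM.mul_sq_mem _ h2))
      by_contra hpos
      push_neg at hpos
      obtain ⟨ε, hε, hε2⟩ : ∃ ε : ℝ, 0 < ε ∧ ε ^ 2 < α (b' ^ 2) := by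
        refine ⟨Real.sqrt (α (b' ^ 2) / 2), by positivity, ?_⟩
        rw [Real.sq_sqrt (by linarith)]
        linarith
      exact absurd (hle ε hε) (by linarith)
    have hlow : 0 ≤ α (b' ^ 2) := Lnonneg _ (hQM.sq_mem b')
    have hz : α (b' ^ 2) = 0 := le_antisymm hup hlow
    have e : b ^ 2 = (b' ^ 2 + C (2 * α b) * b') + C ((α b) ^ 2) := by
      rw [hb']
      simp only [map_mul, map_pow, map_ofNat]
      ring
    rw [e, Ladd, Ladd, hz, Lsmul, hαb', Lconst]
    ring
  have Lmul : ∀ b c : MvPolynomial (Fin n) ℝ, α (b * c) = α b * α c := by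
    intro b c
    have e : C (4:ℝ) * (b * c) = (b + c) ^ 2 + (-((b - c) ^ 2)) := by
      rw [map_ofNat]; ring
    have h4 := Lsmul 4 (b * c)
    rw [e, Ladd, Lsq, Lneg, Lsq] at h4
    have eb : α (b + c) = α b + α c := Ladd b c
    have ec : α (b - c) = α b - α c := by
      rw [sub_eq_add_neg, Ladd, Lneg]; ring
    rw [eb, ec] at h4
    nlinarith [h4]
  obtain ⟨x, hx⟩ : ∃ x : Fin n → ℝ, ∀ i, x i = α (X i) := ⟨fun i => α (X i), fun _ => rfl⟩
  have heval : ∀ p : MvPolynomial (Fin n) ℝ, eval x p = α p := by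
    intro p
    induction p using MvPolynomial.induction_on with
    | C a => rw [eval_C, Lconst]
    | add p q hp hq => rw [map_add, Ladd, hp, hq]
    | mul_X p i hp => rw [map_mul, Lmul, hp, eval_X, hx]
  exact ⟨x, fun p hp => by rw [heval]; exact Lnonneg p hp⟩

end IsQM

namespace Lasserre

variable {n k : ℕ} {g : Fin k → MvPolynomial (Fin n) ℝ} {j₀ : Fin k} {M : ℝ}

theorem core (hM : 0 < M) (hball : g j₀ = C M - ∑ i, X i ^ 2)
    {a : MvPolynomial (Fin n) ℝ} (ha : a ∉ QMod g) :
    ∃ x : Fin n → ℝ, (∀ p ∈ QMod g, 0 ≤ eval x p) ∧ eval x a ≤ 0 := by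
  have hQM := qmod_isQM g
  have harchM : IsQM.Arch (QMod g) := fun p => bdd_all g hM hball p
  -- the quadratic module generated by `QMod g` and `-a`
  obtain ⟨M₁, hM₁def⟩ : ∃ M₁ : Set (MvPolynomial (Fin n) ℝ),
      M₁ = {x | ∃ q ∈ QMod g, ∃ s, IsSOS s ∧ x = q + (-a) * s} := ⟨_, rfl⟩
  have hM₁QM : IsQM M₁ := by
    rw [hM₁def]
    constructor
    · rintro p₁ p₂ ⟨q₁, hq₁, s₁, hs₁, rfl⟩ ⟨q₂, hq₂, s₂, hs₂, rfl⟩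
      exact ⟨q₁ + q₂, hQM.add_mem hq₁ hq₂, s₁ + s₂, hs₁.add hs₂, by ring⟩
    · intro p
      exact ⟨p ^ 2, hQM.sq_mem p, 0, IsSOS.zero, by ring⟩
    · rintro s p hs ⟨q, hq, s', hs', rfl⟩
      exact ⟨s * q, hQM.sos_mul_mem hs hq, s * s', hs.mul hs', by ring⟩
  have hsub : QMod g ⊆ M₁ := by
    rw [hM₁def]
    exact fun x hx => ⟨x, hx, 0, IsSOS.zero, by ring⟩
  have hmem : -a ∈ M₁ := by
    rw [hM₁def]
    exact ⟨0, hQM.zero_mem, 1, IsSOS.one, by ring⟩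
  -- M₁ must be proper
  have hproper : (-1 : MvPolynomial (Fin n) ℝ) ∉ M₁ := by
    intro hneg
    rw [hM₁def] at hneg
    obtain ⟨q, hq, s, hs, he⟩ := hneg
    have key : a * s = 1 + q := by linear_combination he
    exact ha (IsQM.mem_of_mul_sos hQM harchM hs hq key)
  -- extend to a maximal proper quadratic module
  obtain ⟨Q, hQsub, hQQM, hQprop, hQmax⟩ := IsQM.exists_maximal hM₁QM hproper
  have harchQ : IsQM.Arch Q := by
    intro p
    obtain ⟨c, hc, h1, h2⟩ := harchM p
    exact ⟨c, hc, hQsub (hsub h1), hQsub (hsub h2)⟩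
  have htot := IsQM.total_of_maximal hQQM hQprop harchQ hQmax
  obtain ⟨x, hx⟩ := IsQM.exists_point hQQM hQprop harchQ htot
  refine ⟨x, fun p hp => hx p (hQsub (hsub hp)), ?_⟩
  have := hx (-a) (hQsub hmem)
  rw [map_neg] at this
  linarith

/-- Putinar's Positivstellensatz (ball constraint version). -/
theorem putinar (hM : 0 < M) (hball : g j₀ = C M - ∑ i, X i ^ 2)
    {a : MvPolynomial (Fin n) ℝ}
    (hpos : ∀ x : Fin n → ℝ, (∀ j, 0 ≤ eval x (g j)) → 0 < eval x a) : a ∈ QMod g := by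
  by_contra ha
  obtain ⟨x, hx, hxa⟩ := core hM hball ha
  have hxK : ∀ j, 0 ≤ eval x (g j) := fun j => hx _ (g_mem_qmod g j)
  linarith [hpos x hxK]

theorem eval_nonneg_of_mem {x : Fin n → ℝ} (hx : ∀ j, 0 ≤ eval x (g j))
    {q : MvPolynomial (Fin n) ℝ} (hq : q ∈ QMod g) : 0 ≤ eval x q := by
  obtain ⟨σ0, σ, hσ0, hσ, rfl⟩ := hq
  rw [map_add, map_sum]
  refine add_nonneg (hσ0.eval_nonneg x) (Finset.sum_nonneg fun j _ => ?_)
  rw [map_mul]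
  exact mul_nonneg ((hσ j).eval_nonneg x) (hx j)

end Lasserre

/-- Convergence of the dense Lasserre hierarchy under the ball (Archimedean) constraint. -/
theorem lasserre_dense_convergence
    (n k : ℕ) (r : MvPolynomial (Fin n) ℝ) (g : Fin k → MvPolynomial (Fin n) ℝ)
    (K : Set (Fin n → ℝ))
    (hK : K = {x | ∀ j, 0 ≤ eval x (g j)})
    (hKne : K.Nonempty)
    (j₀ : Fin k) (M : ℝ) (hM : 0 < M)
    (hball : g j₀ = C M - ∑ i, X i ^ 2)
    (p : ℕ → EReal)
    (hp : ∀ d : ℕ, p d = sSup {y : EReal | ∃ μ : ℝ, y = (μ : EReal) ∧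
        ∃ (σ0 : MvPolynomial (Fin n) ℝ) (σ : Fin k → MvPolynomial (Fin n) ℝ),
          IsSOS σ0 ∧ (∀ j, IsSOS (σ j)) ∧
          σ0.totalDegree ≤ 2 * d ∧
          (∀ j, (σ j * g j).totalDegree ≤ 2 * d) ∧
          r - C μ = σ0 + ∑ j, σ j * g j})
    (rstar : EReal)
    (hrstar : rstar = sInf {y : EReal | ∃ x ∈ K, y = ((eval x r : ℝ) : EReal)}) :
    Monotone p ∧ Tendsto p atTop (nhds rstar) := by
  -- monotonicity
  have hmono : Monotone p := by
    intro d e hde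
    rw [hp d, hp e]
    apply sSup_le_sSup
    rintro y ⟨μ, rfl, σ0, σ, h1, h2, h3, h4, h5⟩
    exact ⟨μ, rfl, σ0, σ, h1, h2, h3.trans (by omega), fun j => (h4 j).trans (by omega), h5⟩
  have hKmem : ∀ x ∈ K, ∀ j, 0 ≤ eval x (g j) := by
    intro x hx
    rw [hK] at hx
    exact hx
  -- upper bound : p d ≤ rstar
  have hub : ∀ d, p d ≤ rstar := by
    intro d
    rw [hp d, hrstar]
    apply sSup_le
    rintro y ⟨μ, rfl, σ0, σ, hσ0, hσ, -, -, heq⟩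
    apply le_sInf
    rintro z ⟨x, hxK, rfl⟩
    rw [EReal.coe_le_coe_iff]
    have hmem : σ0 + ∑ j, σ j * g j ∈ Lasserre.QMod g := ⟨σ0, σ, hσ0, hσ, rfl⟩
    have h0 := Lasserre.eval_nonneg_of_mem (hKmem x hxK) hmem
    rw [← heq, map_sub, eval_C] at h0
    linarith
  -- rstar is a real number
  obtain ⟨x₀, hx₀⟩ := hKne
  have hrle : rstar ≤ ((eval x₀ r : ℝ) : EReal) := by
    rw [hrstar]
    exact sInf_le ⟨x₀, hx₀, rfl⟩
  obtain ⟨c, hc0, -, hcr⟩ := Lasserre.bdd_all g hM hball r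
  have hlb : ((-c : ℝ) : EReal) ≤ rstar := by
    rw [hrstar]
    apply le_sInf
    rintro z ⟨x, hxK, rfl⟩
    rw [EReal.coe_le_coe_iff]
    have h0 := Lasserre.eval_nonneg_of_mem (hKmem x hxK) hcr
    rw [map_add, eval_C] at h0
    linarith
  have hrne_top : rstar ≠ ⊤ := (hrle.trans_lt (EReal.coe_lt_top _)).ne
  have hrne_bot : rstar ≠ ⊥ := ((EReal.bot_lt_coe _).trans_le hlb).ne'
  obtain ⟨ρ, hρ⟩ : ∃ ρ : ℝ, rstar = (ρ : EReal) :=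
    ⟨rstar.toReal, (EReal.coe_toReal hrne_top hrne_bot).symm⟩
  have hρle : ∀ x ∈ K, ρ ≤ eval x r := by
    intro x hx
    have h1 : rstar ≤ ((eval x r : ℝ) : EReal) := by
      rw [hrstar]
      exact sInf_le ⟨x, hx, rfl⟩
    rw [hρ, EReal.coe_le_coe_iff] at h1
    exact h1
  -- approximation from below
  have hkey : ∀ ε : ℝ, 0 < ε → ∃ d, ((ρ - ε : ℝ) : EReal) ≤ p d := by
    intro ε hε
    have hpos : ∀ x : Fin n → ℝ, (∀ j, 0 ≤ eval x (g j)) → 0 < eval x (r - C (ρ - ε)) := by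
      intro x hx
      have hxK : x ∈ K := by rw [hK]; exact hx
      rw [map_sub, eval_C]
      have := hρle x hxK
      linarith
    obtain ⟨σ0, σ, hσ0, hσ, heq⟩ := Lasserre.putinar hM hball hpos
    obtain ⟨d, hd0, hd⟩ : ∃ d, σ0.totalDegree ≤ 2*d ∧ ∀ j, (σ j * g j).totalDegree ≤ 2*d := by
      refine ⟨σ0.totalDegree + ∑ j, (σ j * g j).totalDegree, by omega, fun j => ?_⟩
      have h := Finset.single_le_sum (f := fun j => (σ j * g j).totalDegree)
        (fun i _ => Nat.zero_le _) (Finset.mem_univ j)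
      omega
    refine ⟨d, ?_⟩
    rw [hp d]
    exact le_sSup ⟨ρ - ε, rfl, σ0, σ, hσ0, hσ, hd0, hd, heq⟩
  -- the supremum is rstar
  have hsup : (⨆ d, p d) = rstar := by
    refine le_antisymm (iSup_le hub) ?_
    rw [hρ]
    by_contra hlt
    push_neg at hlt
    obtain ⟨d1, hd1⟩ := hkey 1 one_pos
    have hgt : ((ρ - 1 : ℝ) : EReal) ≤ ⨆ d, p d := hd1.trans (le_iSup p d1)
    have hne_bot : (⨆ d, p d) ≠ ⊥ := by
      intro hb
      rw [hb] at hgt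
      exact (EReal.bot_lt_coe _).not_ge hgt
    have hne_top : (⨆ d, p d) ≠ ⊤ := hlt.ne_top
    have hς : (((⨆ d, p d).toReal : ℝ) : EReal) = ⨆ d, p d := EReal.coe_toReal hne_top hne_bot
    have hςρ : (⨆ d, p d).toReal < ρ := by
      rw [← EReal.coe_lt_coe_iff, hς]
      exact hlt
    obtain ⟨d2, hd2⟩ := hkey ((ρ - (⨆ d, p d).toReal)/2) (by linarith)
    have h2 : ((ρ - (ρ - (⨆ d, p d).toReal)/2 : ℝ) : EReal) ≤ ⨆ d, p d :=
      hd2.trans (le_iSup p d2)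
    rw [← hς, EReal.coe_le_coe_iff] at h2
    simp only [EReal.toReal_coe] at h2
    linarith
  refine ⟨hmono, ?_⟩
  have := tendsto_atTop_iSup hmono
  rwa [hsup] at this
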